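/- Let ℋ be a finite-dimensional complex Hilbert space, H ∈ ℒ(ℋ) self-adjoint, σ_* ⊆ σ(H) a subset of its eigenvalues with spectral projection P_*, and assume g := dist(σ_*, σ(H)∖σ_*) > 0. Let g > g̃ > 0 and let 𝓘(A) := ∫_ℝ 𝒲_{g,g̃}(s) e^{iHs} A e^{−iHs} ds. Then: (i) 𝓘 maps the space 𝒜^{OD} := {A ∈ ℒ(ℋ) : A = P_* A P_*^⊥ + P_*^⊥ A P_*} of off-diagonal operators into itself, and on 𝒜^{OD} it is the inverse of −i·ad_H, i.e. for every A ∈ 𝒜^{OD} one has 𝓘(A) ∈ 𝒜^{OD} and [H, 𝓘(A)] = iA; (ii) if moreover diam(σ_*) ≤ g̃, then P_* 𝓘(A) P_* = 0 for every A ∈ ℒ(ℋ). -/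

import Mathlib

open ContinuousLinearMap MeasureTheory

noncomputable section

variable {ℋ : Type*} [NormedAddCommGroup ℋ] [InnerProductSpace ℂ ℋ] [FiniteDimensional ℂ ℋ]

/-- Heisenberg evolution `e^{iHu} A e^{-iHu}`. -/
def heis (H A : ℋ →L[ℂ] ℋ) (u : ℝ) : ℋ →L[ℂ] ℋ :=
  NormedSpace.exp ((Complex.I * u) • H) * A * NormedSpace.exp ((-Complex.I * u) • H)

/-- The quasi-local inverse of the Liouvillian, `𝓘(A) = ∫ W(s) e^{iHs} A e^{-iHs} ds`. -/
def invLiou (W : ℝ → ℝ) (H A : ℋ →L[ℂ] ℋ) : ℋ →L[ℂ] ℋ :=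
  ∫ u : ℝ, W u • heis H A u

/-- The defining properties of the weight function `𝒲_{g,g̃}`: odd, integrable, with rapid
decay, whose Fourier transform is `i/ω` for `|ω| ≥ g` and `0` for `|ω| ≤ g̃`. -/
def IsW (W : ℝ → ℝ) (g gt : ℝ) : Prop :=
  (∀ u : ℝ, W (-u) = -W u) ∧ Integrable W ∧
  (∀ n : ℕ, ∃ C : ℝ, ∀ u : ℝ, 1 ≤ |u| → |u| ^ n * |W u| ≤ C) ∧
  (∀ ω : ℝ, g ≤ |ω| →
    (∫ u : ℝ, (W u : ℂ) * Complex.exp (Complex.I * ω * u)) = Complex.I / ω) ∧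
  (∀ ω : ℝ, |ω| ≤ gt → (∫ u : ℝ, (W u : ℂ) * Complex.exp (Complex.I * ω * u)) = 0)

local notation "⟪" x ", " y "⟫" => @inner ℂ _ _ x y


lemma exp_eigen (H : ℋ →L[ℂ] ℋ) (c μ : ℂ) (ψ : ℋ) (hψ : H ψ = μ • ψ) :
    NormedSpace.exp (c • H) ψ = Complex.exp (c * μ) • ψ := by
  have h1 : ∀ n : ℕ, ((c • H) ^ n) ψ = (c * μ) ^ n • ψ := by
    intro n
    induction n with
    | zero => simp
    | succ n ih =>
      rw [pow_succ, ContinuousLinearMap.mul_apply, ContinuousLinearMap.smul_apply, hψ,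
        smul_smul, _root_.map_smul, ih, smul_smul, pow_succ]
      ring_nf
  have h2 : HasSum (fun n : ℕ => (Nat.factorial n : ℂ)⁻¹ • ((c • H) ^ n) ψ)
      (NormedSpace.exp (c • H) ψ) := by
    have := (ContinuousLinearMap.apply ℂ ℋ ψ).hasSum
      (NormedSpace.exp_series_hasSum_exp' (𝕂 := ℂ) (c • H))
    simpa using this
  have h3 : HasSum (fun n : ℕ => (Nat.factorial n : ℂ)⁻¹ • ((c • H) ^ n) ψ)
      (Complex.exp (c * μ) • ψ) := by
    have := (NormedSpace.exp_series_hasSum_exp' (𝕂 := ℂ) (c * μ)).smul_const ψ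
    rw [← Complex.exp_eq_exp_ℂ] at this
    convert this using 2 with n
    rw [h1, smul_smul, smul_eq_mul]
  exact h2.unique h3

lemma star_exp_smul (H : ℋ →L[ℂ] ℋ) (hH : IsSelfAdjoint H) (c : ℂ) :
    star (NormedSpace.exp (c • H)) = NormedSpace.exp ((starRingEnd ℂ c) • H) := by
  rw [NormedSpace.star_exp, star_smul, hH.star_eq]
  rfl

lemma exp_skew_comp (H : ℋ →L[ℂ] ℋ) (hH : IsSelfAdjoint H) (c : ℂ)
    (hc : (starRingEnd ℂ) c = -c) (x : ℋ) :
    NormedSpace.exp (c • H) (NormedSpace.exp (-c • H) x) = x := by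
  have h : NormedSpace.exp (c • H) * NormedSpace.exp (-c • H) = 1 := by
    let +nondep : NormedAlgebra ℚ (ℋ →L[ℂ] ℋ) := .restrictScalars ℚ ℂ (ℋ →L[ℂ] ℋ)
    rw [neg_smul, ← NormedSpace.exp_add_of_commute (Commute.refl (c • H)).neg_right]
    simp [NormedSpace.exp_zero]
  calc NormedSpace.exp (c • H) (NormedSpace.exp (-c • H) x)
      = (NormedSpace.exp (c • H) * NormedSpace.exp (-c • H)) x := rfl
    _ = x := by rw [h]; rfl

lemma exp_skew_norm (H : ℋ →L[ℂ] ℋ) (hH : IsSelfAdjoint H) (c : ℂ)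
    (hc : (starRingEnd ℂ) c = -c) (x : ℋ) :
    ‖NormedSpace.exp (c • H) x‖ = ‖x‖ := by
  have h1 : ⟪NormedSpace.exp (c • H) x, NormedSpace.exp (c • H) x⟫ = ⟪x, x⟫ := by
    rw [← ContinuousLinearMap.adjoint_inner_right, ← ContinuousLinearMap.star_eq_adjoint,
      star_exp_smul H hH, hc]
    congr 1
    have := exp_skew_comp H hH (-c) (by rw [map_neg, hc]) x
    rwa [neg_neg] at this
  rw [inner_self_eq_norm_sq_to_K, inner_self_eq_norm_sq_to_K] at h1
  have h3 : ‖NormedSpace.exp (c • H) x‖ ^ 2 = ‖x‖ ^ 2 := by exact_mod_cast h1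
  nlinarith [norm_nonneg (NormedSpace.exp (c • H) x), norm_nonneg x]

lemma conj_I_mul (u : ℝ) : (starRingEnd ℂ) (Complex.I * u) = -(Complex.I * u) := by
  simp [Complex.conj_ofReal, mul_comm]

lemma heis_norm_le (H : ℋ →L[ℂ] ℋ) (hH : IsSelfAdjoint H) (A : ℋ →L[ℂ] ℋ) (u : ℝ) :
    ‖heis H A u‖ ≤ ‖A‖ := by
  refine ContinuousLinearMap.opNorm_le_bound _ (norm_nonneg A) fun x => ?_
  have h1 : heis H A u x = NormedSpace.exp ((Complex.I * u) • H)
      (A (NormedSpace.exp ((-Complex.I * u) • H) x)) := rfl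
  rw [h1, exp_skew_norm H hH _ (conj_I_mul u)]
  calc ‖A (NormedSpace.exp ((-Complex.I * u) • H) x)‖
      ≤ ‖A‖ * ‖NormedSpace.exp ((-Complex.I * u) • H) x‖ := A.le_opNorm _
    _ = ‖A‖ * ‖x‖ := by
        rw [exp_skew_norm H hH _ (by rw [neg_mul, map_neg, conj_I_mul u, neg_neg])]

lemma heis_continuous (H A : ℋ →L[ℂ] ℋ) : Continuous (heis H A) := by
  have h1 : Continuous fun u : ℝ => ((Complex.I * u : ℂ) • H) :=
    ((continuous_const.mul Complex.continuous_ofReal).smul continuous_const)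
  have h2 : Continuous fun u : ℝ => ((-Complex.I * u : ℂ) • H) :=
    ((continuous_const.mul Complex.continuous_ofReal).smul continuous_const)
  let +nondep : NormedAlgebra ℚ (ℋ →L[ℂ] ℋ) := .restrictScalars ℚ ℂ (ℋ →L[ℂ] ℋ)
  exact ((NormedSpace.exp_continuous.comp h1).mul continuous_const).mul
    (NormedSpace.exp_continuous.comp h2)

lemma heis_integrable (W : ℝ → ℝ) (hWi : Integrable W) (H : ℋ →L[ℂ] ℋ)
    (hH : IsSelfAdjoint H) (A : ℋ →L[ℂ] ℋ) :
    Integrable (fun u : ℝ => W u • heis H A u) := by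
  refine Integrable.mono' ((hWi.abs).mul_const ‖A‖)
    (hWi.aestronglyMeasurable.smul (heis_continuous H A).aestronglyMeasurable)
    (Filter.Eventually.of_forall fun u => ?_)
  rw [norm_smul (W u) (heis H A u), Real.norm_eq_abs]
  exact mul_le_mul_of_nonneg_left (heis_norm_le H hH A u) (abs_nonneg _)

lemma inner_heis (H : ℋ →L[ℂ] ℋ) (hH : IsSelfAdjoint H) (A : ℋ →L[ℂ] ℋ) (u : ℝ)
    (ν μ : ℝ) (φ ψ : ℋ) (hφ : H φ = (ν : ℂ) • φ) (hψ : H ψ = (μ : ℂ) • ψ) :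
    ⟪φ, heis H A u ψ⟫ = Complex.exp (Complex.I * ((ν - μ : ℝ) : ℂ) * u) * ⟪φ, A ψ⟫ := by
  have h1 : heis H A u ψ = NormedSpace.exp ((Complex.I * u) • H)
      (A (NormedSpace.exp ((-Complex.I * u) • H) ψ)) := rfl
  rw [h1, exp_eigen H _ _ ψ hψ, _root_.map_smul, _root_.map_smul, inner_smul_right,
    ← ContinuousLinearMap.adjoint_inner_left, ← ContinuousLinearMap.star_eq_adjoint,
    star_exp_smul H hH, conj_I_mul, ← neg_mul,
    exp_eigen H _ _ φ hφ, inner_smul_left]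
  rw [← Complex.exp_conj]
  simp only [map_mul, map_neg, Complex.conj_I, Complex.conj_ofReal]
  rw [← mul_assoc, ← Complex.exp_add]
  congr 2
  push_cast
  ring

lemma inner_invLiou (W : ℝ → ℝ) (hWi : Integrable W) (H : ℋ →L[ℂ] ℋ) (hH : IsSelfAdjoint H)
    (A : ℋ →L[ℂ] ℋ) (ν μ : ℝ) (φ ψ : ℋ) (hφ : H φ = (ν : ℂ) • φ) (hψ : H ψ = (μ : ℂ) • ψ) :
    ⟪φ, invLiou W H A ψ⟫ =
      (∫ u : ℝ, (W u : ℂ) * Complex.exp (Complex.I * ((ν - μ : ℝ) : ℂ) * u)) * ⟪φ, A ψ⟫ := by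
  have hint := heis_integrable W hWi H hH A
  have h1 : invLiou W H A ψ = ∫ u : ℝ, (W u • heis H A u) ψ := by
    rw [invLiou, ContinuousLinearMap.integral_apply hint]
  have hint2 : Integrable (fun u : ℝ => (W u • heis H A u) ψ) :=
    (ContinuousLinearMap.apply ℂ ℋ ψ).integrable_comp hint
  rw [h1, ← integral_inner hint2 φ, ← integral_mul_const]
  congr 1
  ext u
  rw [ContinuousLinearMap.smul_apply, inner_smul_right_eq_smul,
    inner_heis H hH A u ν μ φ ψ hφ hψ, Complex.real_smul]
  ring

lemma eq_zero_of_inner_basis {ι : Type*} [Fintype ι] (b : OrthonormalBasis ι ℂ ℋ)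
    (T : ℋ →L[ℂ] ℋ) (h : ∀ i j, ⟪b j, T (b i)⟫ = 0) : T = 0 := by
  have hx : ∀ i, T (b i) = 0 := by
    intro i
    have h0 : b.repr (T (b i)) = 0 := by
      ext j
      simpa [b.repr_apply_apply] using h i j
    have := b.repr.injective (by simpa using h0)
    simpa using this
  apply ContinuousLinearMap.coe_injective
  apply b.toBasis.ext
  intro i
  simpa using hx i

/-- Lemma on the quasi-local inverse of the Liouvillian: for a self-adjoint `H`
on a finite-dimensional Hilbert space, a part `σ_*` of its spectrum at distance `≥ g` from
the rest, with spectral projection `P`, and `g > g̃ > 0`: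
(i) `𝓘` maps off-diagonal operators to off-diagonal operators and inverts `-i·ad_H` there;
(ii) if `diam σ_* ≤ g̃`, then `P 𝓘(A) P = 0` for every `A`. -/
theorem stmt7 (H : ℋ →L[ℂ] ℋ) (hH : IsSelfAdjoint H)
    (σs : Set ℂ) (hσs : σs ⊆ spectrum ℂ H)
    (g gt : ℝ) (hgt : 0 < gt) (hg : gt < g)
    (hgap : ∀ μ ∈ σs, ∀ ν ∈ spectrum ℂ H, ν ∉ σs → g ≤ ‖μ - ν‖)
    (P : ℋ →L[ℂ] ℋ) (hPsa : IsSelfAdjoint P) (hPidem : P * P = P)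
    (hPin : ∀ μ ∈ σs, ∀ ψ : ℋ, H ψ = μ • ψ → P ψ = ψ)
    (hPout : ∀ μ ∈ spectrum ℂ H, μ ∉ σs → ∀ ψ : ℋ, H ψ = μ • ψ → P ψ = 0)
    (W : ℝ → ℝ) (hW : IsW W g gt) :
    (∀ A : ℋ →L[ℂ] ℋ,
      -- A off-diagonal, i.e. A = P A P^⊥ + P^⊥ A P :
      P * A * P = 0 → (1 - P) * A * (1 - P) = 0 →
        P * invLiou W H A * P = 0 ∧ (1 - P) * invLiou W H A * (1 - P) = 0 ∧
        H * invLiou W H A - invLiou W H A * H = Complex.I • A) ∧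
    ((∀ μ ∈ σs, ∀ ν ∈ σs, ‖μ - ν‖ ≤ gt) →
      ∀ A : ℋ →L[ℂ] ℋ, P * invLiou W H A * P = 0) := by
  classical
  obtain ⟨hodd, hWint, hdecay, hFg, hFgt⟩ := hW
  have hsym : (↑H : ℋ →ₗ[ℂ] ℋ).IsSymmetric := hH.isSymmetric
  set b := hsym.eigenvectorBasis (rfl : Module.finrank ℂ ℋ = Module.finrank ℂ ℋ) with hbdef
  set Ei := hsym.eigenvalues (rfl : Module.finrank ℂ ℋ = Module.finrank ℂ ℋ) with hEdef
  have hb : ∀ i, H (b i) = ((Ei i : ℂ)) • b i := fun i =>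
    hsym.apply_eigenvectorBasis rfl i
  have hspec : ∀ i, ((Ei i : ℂ)) ∈ spectrum ℂ H := by
    intro i
    by_contra hout
    rw [spectrum.notMem_iff] at hout
    obtain ⟨u, hu⟩ := hout
    have h0 : (algebraMap ℂ (ℋ →L[ℂ] ℋ) (Ei i) - H) (b i) = 0 := by
      simp [ContinuousLinearMap.sub_apply, hb i, Algebra.algebraMap_eq_smul_one]
    have h1 : (↑u⁻¹ : ℋ →L[ℂ] ℋ) * ↑u = 1 := u.inv_mul
    have h2 : b i = 0 := by
      have h3 := congrArg (fun T : ℋ →L[ℂ] ℋ => T (b i)) h1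
      simp only [ContinuousLinearMap.mul_apply, ContinuousLinearMap.one_apply] at h3
      rw [hu, h0, map_zero] at h3
      exact h3.symm
    exact b.toBasis.ne_zero i (by simpa using h2)
  have hmem : ∀ i, ((Ei i : ℂ)) ∈ σs → P (b i) = b i := fun i hi => hPin _ hi _ (hb i)
  have hnmem : ∀ i, ((Ei i : ℂ)) ∉ σs → P (b i) = 0 := fun i hi =>
    hPout _ (hspec i) hi _ (hb i)
  have hadj : ContinuousLinearMap.adjoint P = P := by
    rw [← ContinuousLinearMap.star_eq_adjoint]; exact hPsa
  have hPmv : ∀ x y : ℋ, ⟪x, P y⟫ = ⟪P x, y⟫ := fun x y => by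
    rw [← ContinuousLinearMap.adjoint_inner_left P y x, hadj]
  have hHadj : ContinuousLinearMap.adjoint H = H := by
    rw [← ContinuousLinearMap.star_eq_adjoint]; exact hH
  have hHmv : ∀ x y : ℋ, ⟪x, H y⟫ = ⟪H x, y⟫ := fun x y => by
    rw [← ContinuousLinearMap.adjoint_inner_left H y x, hHadj]
  have hQin : ∀ i, ((Ei i : ℂ)) ∈ σs → (1 - P) (b i) = 0 := fun i hi => by
    simp [ContinuousLinearMap.sub_apply, hmem i hi]
  have hQout : ∀ i, ((Ei i : ℂ)) ∉ σs → (1 - P) (b i) = b i := fun i hi => by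
    simp [ContinuousLinearMap.sub_apply, hnmem i hi]
  have hQmv : ∀ x y : ℋ, ⟪x, (1 - P) y⟫ = ⟪(1 - P) x, y⟫ := fun x y => by
    simp only [ContinuousLinearMap.sub_apply, ContinuousLinearMap.one_apply,
      inner_sub_right, inner_sub_left, hPmv]
  have hT : ∀ (A : ℋ →L[ℂ] ℋ) (i j), ⟪b j, invLiou W H A (b i)⟫ =
      (∫ u : ℝ, (W u : ℂ) * Complex.exp (Complex.I * ((Ei j - Ei i : ℝ) : ℂ) * u)) *
        ⟪b j, A (b i)⟫ :=
    fun A i j => inner_invLiou W hWint H hH A (Ei j) (Ei i) (b j) (b i) (hb j) (hb i)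
  constructor
  · intro A hPAP hQAQ
    -- the vanishing inner products with A
    have hA0 : ∀ i j, ((Ei i : ℂ)) ∈ σs → ((Ei j : ℂ)) ∈ σs → ⟪b j, A (b i)⟫ = 0 := by
      intro i j hi hj
      have h3 := congrArg (fun T : ℋ →L[ℂ] ℋ => ⟪b j, T (b i)⟫) hPAP
      simp only [ContinuousLinearMap.mul_apply, ContinuousLinearMap.zero_apply,
        inner_zero_right] at h3
      rwa [hmem i hi, hPmv, hmem j hj] at h3
    have hA0' : ∀ i j, ((Ei i : ℂ)) ∉ σs → ((Ei j : ℂ)) ∉ σs → ⟪b j, A (b i)⟫ = 0 := by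
      intro i j hi hj
      have h3 := congrArg (fun T : ℋ →L[ℂ] ℋ => ⟪b j, T (b i)⟫) hQAQ
      simp only [ContinuousLinearMap.mul_apply, ContinuousLinearMap.zero_apply,
        inner_zero_right] at h3
      rwa [hQout i hi, hQmv, hQout j hj] at h3
    refine ⟨?_, ?_, ?_⟩
    · refine eq_zero_of_inner_basis b _ fun i j => ?_
      simp only [ContinuousLinearMap.mul_apply, ContinuousLinearMap.zero_apply,
        inner_zero_right]
      rw [hPmv]
      by_cases hj : ((Ei j : ℂ)) ∈ σs
      · rw [hmem j hj]
        by_cases hi : ((Ei i : ℂ)) ∈ σs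
        · rw [hmem i hi, hT A i j, hA0 i j hi hj, mul_zero]
        · rw [hnmem i hi, map_zero, inner_zero_right]
      · rw [hnmem j hj, inner_zero_left]
    · refine eq_zero_of_inner_basis b _ fun i j => ?_
      simp only [ContinuousLinearMap.mul_apply, ContinuousLinearMap.zero_apply,
        inner_zero_right]
      rw [hQmv]
      by_cases hj : ((Ei j : ℂ)) ∈ σs
      · rw [hQin j hj, inner_zero_left]
      · rw [hQout j hj]
        by_cases hi : ((Ei i : ℂ)) ∈ σs
        · rw [hQin i hi, map_zero, inner_zero_right]
        · rw [hQout i hi, hT A i j, hA0' i j hi hj, mul_zero]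
    · have hD : H * invLiou W H A - invLiou W H A * H - Complex.I • A = 0 := by
        refine eq_zero_of_inner_basis b _ fun i j => ?_
        simp only [ContinuousLinearMap.sub_apply, ContinuousLinearMap.mul_apply,
          ContinuousLinearMap.smul_apply, inner_sub_right, inner_smul_right,
          ContinuousLinearMap.zero_apply, inner_zero_right]
        rw [hHmv, hb j, inner_smul_left, Complex.conj_ofReal, hb i, _root_.map_smul,
          inner_smul_right, hT A i j]
        by_cases hi : ((Ei i : ℂ)) ∈ σs
        · by_cases hj : ((Ei j : ℂ)) ∈ σs
          · rw [hA0 i j hi hj]; ring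
          · -- mixed : i in, j out
            have hgap1 : g ≤ |Ei j - Ei i| := by
              have h4 := hgap _ hi _ (hspec j) hj
              have h5 : ((Ei i : ℂ)) - Ei j = ((Ei i - Ei j : ℝ) : ℂ) := by push_cast; ring
              rw [h5] at h4
              rw [abs_sub_comm, ← Real.norm_eq_abs, ← Complex.norm_real]
              simpa [Complex.ofReal_sub] using h4
            have hω0 : ((Ei j - Ei i : ℝ) : ℂ) ≠ 0 := by
              simp only [ne_eq, Complex.ofReal_eq_zero]
              intro h6; rw [h6] at hgap1; simp at hgap1; linarith
            rw [hFg _ hgap1]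
            set a := (inner ℂ (b j) (A (b i)) : ℂ) with ha
            have h7 : ((Ei j : ℂ)) - Ei i = ((Ei j - Ei i : ℝ) : ℂ) := by push_cast; ring
            have h8 : ((Ei j - Ei i : ℝ) : ℂ) * (Complex.I / ((Ei j - Ei i : ℝ) : ℂ)) =
                Complex.I := by rw [mul_comm, div_mul_cancel₀ _ hω0]
            linear_combination (Complex.I / ((Ei j - Ei i : ℝ) : ℂ) * a) * h7 + a * h8
        · by_cases hj : ((Ei j : ℂ)) ∈ σs
          · -- mixed : j in, i out
            have hgap1 : g ≤ |Ei j - Ei i| := by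
              have h4 := hgap _ hj _ (hspec i) hi
              have h5 : ((Ei j : ℂ)) - Ei i = ((Ei j - Ei i : ℝ) : ℂ) := by push_cast; ring
              rw [← Real.norm_eq_abs, ← Complex.norm_real]
              simpa [Complex.ofReal_sub] using h4
            have hω0 : ((Ei j - Ei i : ℝ) : ℂ) ≠ 0 := by
              simp only [ne_eq, Complex.ofReal_eq_zero]
              intro h6; rw [h6] at hgap1; simp at hgap1; linarith
            rw [hFg _ hgap1]
            set a := (inner ℂ (b j) (A (b i)) : ℂ) with ha
            have h7 : ((Ei j : ℂ)) - Ei i = ((Ei j - Ei i : ℝ) : ℂ) := by push_cast; ring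
            have h8 : ((Ei j - Ei i : ℝ) : ℂ) * (Complex.I / ((Ei j - Ei i : ℝ) : ℂ)) =
                Complex.I := by rw [mul_comm, div_mul_cancel₀ _ hω0]
            linear_combination (Complex.I / ((Ei j - Ei i : ℝ) : ℂ) * a) * h7 + a * h8
          · rw [hA0' i j hi hj]; ring
      exact sub_eq_zero.mp hD
  · intro hdiam A
    refine eq_zero_of_inner_basis b _ fun i j => ?_
    simp only [ContinuousLinearMap.mul_apply, ContinuousLinearMap.zero_apply,
      inner_zero_right]
    rw [hPmv]
    by_cases hj : ((Ei j : ℂ)) ∈ σs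
    · rw [hmem j hj]
      by_cases hi : ((Ei i : ℂ)) ∈ σs
      · rw [hmem i hi, hT A i j]
        have hd : |Ei j - Ei i| ≤ gt := by
          have h4 := hdiam _ hj _ hi
          have h5 : ((Ei j : ℂ)) - Ei i = ((Ei j - Ei i : ℝ) : ℂ) := by push_cast; ring
          rw [← Real.norm_eq_abs, ← Complex.norm_real]
          simpa [Complex.ofReal_sub] using h4
        rw [hFgt _ hd, zero_mul]
      · rw [hnmem i hi, map_zero, inner_zero_right]
    · rw [hnmem j hj, inner_zero_left]
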